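/- Consider a tree-structured latent model rooted at i with latent pmf q(y) = ρ(y_i)·Π_{v≠i} t_v(y_v, y_{par(v)}) and a noisy-or observation X with P(X=0 | Y=y) = S(y) = (1-l)·Π_v (f_v)^{[y_v]}. Assume ρ(0) > 0, ρ(1) > 0, and t_k(d, 0) > 0 for every child k of i and every d ∈ {0,1}. For each child k of i define the correction factor c_k = (Σ_{d} P(Y_k=d | Y_i=1)·P(X=0 | Y_i=0, Y_k=d)) / P(X=0 | Y_i=0). Then f_i = (Π_{k child of i} c_k^{-1}) · (P(X=0 | Y_i=1) / P(X=0 | Y_i=0)); i.e., the failure probability of Y_i for X is exactly recovered by the serial correction estimator. -/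

import Mathlib

set_option linter.dupNamespace false
set_option linter.unusedSectionVars false
set_option linter.unusedVariables false
open Finset

namespace SCE
variable {m : ℕ}

def pinned (E : Finset (Fin m)) (σ : Fin m → Bool) : Finset (Fin m → Bool) :=
  Finset.univ.filter fun y => ∀ v ∉ E, y v = σ v

lemma mem_pinned {E : Finset (Fin m)} {σ y} : y ∈ pinned E σ ↔ ∀ v ∉ E, y v = σ v := by
  simp [pinned]

lemma sum_pinned_split {E : Finset (Fin m)} {σ : Fin m → Bool} {u : Fin m}
    (hu : u ∈ E) (F : (Fin m → Bool) → ℝ) :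
    ∑ y ∈ pinned E σ, F y
      = ∑ b : Bool, ∑ y ∈ pinned (E.erase u) (Function.update σ u b), F y := by
  rw [← Finset.sum_biUnion]
  · apply Finset.sum_congr _ (fun _ _ => rfl)
    ext y
    simp only [Finset.mem_biUnion, Finset.mem_univ, true_and, mem_pinned]
    constructor
    · intro hy
      refine ⟨y u, fun v hv => ?_⟩
      by_cases hvu : v = u
      · subst hvu; simp [Function.update]
      · rw [Finset.mem_erase] at hv
        push_neg at hv
        rw [hy v (hv hvu), Function.update_of_ne hvu]
    · rintro ⟨b, hy⟩ v hv
      have hvu : v ≠ u := fun h => hv (h ▸ hu)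
      have : v ∉ E.erase u := fun h => hv (Finset.mem_of_mem_erase h)
      rw [hy v this, Function.update_of_ne hvu]
  · intro b _ b' _ hbb'
    simp only [Finset.disjoint_left]
    intro y hy hy'
    rw [mem_pinned] at hy hy'
    have h1 := hy u (Finset.notMem_erase u E)
    have h2 := hy' u (Finset.notMem_erase u E)
    rw [Function.update_self] at h1 h2
    exact hbb' (h1 ▸ h2 ▸ rfl)

noncomputable def G (par : Fin m → Fin m) (h : Fin m → Bool → Bool → ℝ)
    (E : Finset (Fin m)) (σ : Fin m → Bool) : ℝ :=
  ∑ y ∈ pinned E σ, ∏ v ∈ E, h v (y v) (y (par v))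

lemma G_empty (par : Fin m → Fin m) (h : Fin m → Bool → Bool → ℝ) (σ : Fin m → Bool) :
    G par h ∅ σ = 1 := by
  have : pinned (∅ : Finset (Fin m)) σ = {σ} := by
    ext y; simp [mem_pinned, funext_iff]
  simp [G, this]

lemma G_congr_sigma (par : Fin m → Fin m) (h : Fin m → Bool → Bool → ℝ)
    (E : Finset (Fin m)) (σ σ' : Fin m → Bool)
    (hσ : ∀ v ∈ E, par v ∉ E → σ (par v) = σ' (par v)) :
    G par h E σ = G par h E σ' := by
  refine Finset.sum_nbij' (i := fun y => fun v => if v ∈ E then y v else σ' v)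
    (j := fun y => fun v => if v ∈ E then y v else σ v) ?_ ?_ ?_ ?_ ?_
  · intro y hy; rw [mem_pinned]; intro v hv; simp [hv]
  · intro y hy; rw [mem_pinned]; intro v hv; simp [hv]
  · intro y hy; rw [mem_pinned] at hy; funext v
    by_cases hv : v ∈ E <;> simp [hv, hy v]
  · intro y hy; rw [mem_pinned] at hy; funext v
    by_cases hv : v ∈ E <;> simp [hv, hy v]
  · intro y hy; rw [mem_pinned] at hy
    refine Finset.prod_congr rfl fun v hv => ?_
    show h v (y v) (y (par v)) = h v (if v ∈ E then y v else σ' v)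
      (if par v ∈ E then y (par v) else σ' (par v))
    by_cases hp : par v ∈ E
    · simp [hv, hp]
    · simp [hv, hp, ← hy (par v) hp, ← hσ v hv hp]

/-- Split the sum at a pinned-parent vertex `u`. -/
lemma G_pin_split (par : Fin m → Fin m) (h : Fin m → Bool → Bool → ℝ)
    {E : Finset (Fin m)} {σ : Fin m → Bool} {u : Fin m}
    (hu : u ∈ E) (hpu : par u ∉ E) :
    G par h E σ = ∑ b : Bool,
      h u b (σ (par u)) * G par h (E.erase u) (Function.update σ u b) := by
  have hpuu : par u ≠ u := fun hh => hpu (by rw [hh]; exact hu)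
  rw [G, sum_pinned_split hu]
  refine Finset.sum_congr rfl fun b _ => ?_
  rw [G, Finset.mul_sum]
  refine Finset.sum_congr rfl fun y hy => ?_
  rw [mem_pinned] at hy
  have hyu : y u = b := by
    have := hy u (Finset.notMem_erase u E)
    rwa [Function.update_self] at this
  have hypu : y (par u) = σ (par u) := by
    have hnm : par u ∉ E.erase u := fun hh => hpu (Finset.mem_of_mem_erase hh)
    have h1 := hy (par u) hnm
    rwa [Function.update_of_ne hpuu] at h1
  rw [← Finset.mul_prod_erase E _ hu, hyu, hypu]

/-- Eliminate a normalized leaf. -/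
lemma G_leaf_elim (par : Fin m → Fin m) (h : Fin m → Bool → Bool → ℝ)
    {E : Finset (Fin m)} {σ : Fin m → Bool} {u : Fin m}
    (hu : u ∈ E) (hleaf : ∀ w ∈ E, par w ≠ u) (hpuu : par u ≠ u)
    (hnorm : ∀ c, h u false c + h u true c = 1) :
    G par h E σ = G par h (E.erase u) (Function.update σ u false) := by
  rw [G, sum_pinned_split hu]
  have key : ∀ b : Bool,
      ∑ y ∈ pinned (E.erase u) (Function.update σ u b), ∏ v ∈ E, h v (y v) (y (par v))
      = ∑ y ∈ pinned (E.erase u) (Function.update σ u false),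
          h u b (y (par u)) * ∏ v ∈ E.erase u, h v (y v) (y (par v)) := by
    intro b
    refine Finset.sum_nbij' (i := fun y => Function.update y u false)
      (j := fun y => Function.update y u b) ?_ ?_ ?_ ?_ ?_
    · intro y hy; rw [mem_pinned] at hy ⊢
      intro v hv
      by_cases hvu : v = u
      · subst hvu; simp
      · simp [Function.update_of_ne hvu, hy v hv]
    · intro y hy; rw [mem_pinned] at hy ⊢
      intro v hv
      by_cases hvu : v = u
      · subst hvu; simp
      · simp [Function.update_of_ne hvu, hy v hv]
    · intro y hy; rw [mem_pinned] at hy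
      funext v
      by_cases hvu : v = u
      · subst hvu
        have := hy v (Finset.notMem_erase v E)
        rw [Function.update_self] at this
        simp [this]
      · simp [Function.update_of_ne hvu]
    · intro y hy; rw [mem_pinned] at hy
      funext v
      by_cases hvu : v = u
      · subst hvu
        have := hy v (Finset.notMem_erase v E)
        rw [Function.update_self] at this
        simp [this]
      · simp [Function.update_of_ne hvu]
    · intro y hy; rw [mem_pinned] at hy
      have hyu : y u = b := by
        have := hy u (Finset.notMem_erase u E)
        rwa [Function.update_self] at this
      rw [← Finset.mul_prod_erase E _ hu, hyu]
      have hpar : Function.update y u false (par u) = y (par u) :=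
        Function.update_of_ne hpuu _ _
      rw [hpar]
      congr 1
      refine Finset.prod_congr rfl fun w hw => ?_
      have hwu : w ≠ u := (Finset.mem_erase.mp hw).1
      have hpwu : par w ≠ u := hleaf w (Finset.mem_of_mem_erase hw)
      rw [Function.update_of_ne hwu, Function.update_of_ne hpwu]
  simp only [key]
  rw [Finset.sum_comm, G]
  refine Finset.sum_congr rfl fun y hy => ?_
  have h1 : ∑ b : Bool, h u b (y (par u)) = 1 := by
    rw [Fintype.sum_bool, add_comm]; exact hnorm _
  rw [← Finset.sum_mul, h1, one_mul]

/-- A fully normalized sum equals 1. -/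
lemma G_norm_one (par : Fin m → Fin m) (h : Fin m → Bool → Bool → ℝ) (i : Fin m)
    (dep : Fin m → ℕ) (hdep : ∀ v, v ≠ i → dep v = dep (par v) + 1)
    (hne : ∀ v, v ≠ i → par v ≠ v)
    (hnorm : ∀ v, v ≠ i → ∀ c, h v false c + h v true c = 1)
    (E : Finset (Fin m)) (hiE : i ∉ E) (σ : Fin m → Bool) :
    G par h E σ = 1 := by
  induction E using Finset.strongInduction generalizing σ with
  | _ E ih =>
    rcases E.eq_empty_or_nonempty with rfl | hE
    · exact G_empty par h σ
    · obtain ⟨u, hu, hmax⟩ := E.exists_max_image dep hE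
      have hui : u ≠ i := fun hh => hiE (hh ▸ hu)
      have hleaf : ∀ w ∈ E, par w ≠ u := by
        intro w hw hpw
        have hwi : w ≠ i := fun hh => hiE (hh ▸ hw)
        have h1 := hdep w hwi
        have h2 := hmax w hw
        rw [hpw] at h1
        omega
      rw [G_leaf_elim par h hu hleaf (hne u hui) (hnorm u hui)]
      exact ih (E.erase u) (Finset.erase_ssubset hu)
        (fun hh => hiE (Finset.mem_of_mem_erase hh)) _

/-- Factorization over two parent-closed disjoint pieces. -/
lemma G_union (par : Fin m → Fin m) (h : Fin m → Bool → Bool → ℝ)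
    {E1 E2 : Finset (Fin m)} {σ : Fin m → Bool}
    (hdisj : Disjoint E1 E2)
    (h12 : ∀ v ∈ E1, par v ∉ E2) (h21 : ∀ v ∈ E2, par v ∉ E1) :
    G par h (E1 ∪ E2) σ = G par h E1 σ * G par h E2 σ := by
  rw [G, G, G, Finset.sum_mul_sum, ← Finset.sum_product']
  refine Finset.sum_nbij'
    (i := fun y => (fun v => if v ∈ E1 then y v else σ v,
                    fun v => if v ∈ E2 then y v else σ v))
    (j := fun p => fun v => if v ∈ E1 then p.1 v else if v ∈ E2 then p.2 v else σ v)
    ?_ ?_ ?_ ?_ ?_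
  · intro y hy
    rw [Finset.mem_product]
    constructor <;> (rw [mem_pinned]; intro v hv; simp [hv])
  · intro p hp
    rw [Finset.mem_product] at hp
    rw [mem_pinned]
    intro v hv
    rw [Finset.mem_union] at hv
    push_neg at hv
    simp [hv.1, hv.2]
  · intro y hy
    rw [mem_pinned] at hy
    funext v
    dsimp only
    by_cases h1 : v ∈ E1
    · simp [h1]
    · by_cases h2 : v ∈ E2
      · simp [h1, h2]
      · have : v ∉ E1 ∪ E2 := by rw [Finset.mem_union]; tauto
        simp [h1, h2, hy v this]
  · intro p hp
    rw [Finset.mem_product] at hp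
    obtain ⟨hp1, hp2⟩ := hp
    rw [mem_pinned] at hp1 hp2
    have e1 : ∀ v, (if v ∈ E1 then
        (if v ∈ E1 then p.1 v else if v ∈ E2 then p.2 v else σ v) else σ v) = p.1 v := by
      intro v
      by_cases h1 : v ∈ E1
      · simp [h1]
      · simp [h1, (hp1 v h1).symm]
    have e2 : ∀ v, (if v ∈ E2 then
        (if v ∈ E1 then p.1 v else if v ∈ E2 then p.2 v else σ v) else σ v) = p.2 v := by
      intro v
      by_cases h2 : v ∈ E2
      · have h1 : v ∉ E1 := fun hh => (Finset.disjoint_left.mp hdisj hh) h2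
        simp [h1, h2]
      · simp [h2, (hp2 v h2).symm]
    exact Prod.ext (funext e1) (funext e2)
  · intro y hy
    rw [mem_pinned] at hy
    rw [Finset.prod_union hdisj]
    dsimp only
    congr 1
    · refine Finset.prod_congr rfl fun v hv => ?_
      have hv2 : par v ∉ E2 := h12 v hv
      by_cases hp1 : par v ∈ E1
      · simp [hv, hp1]
      · have : par v ∉ E1 ∪ E2 := by rw [Finset.mem_union]; tauto
        simp [hv, hp1, hy (par v) this]
    · refine Finset.prod_congr rfl fun v hv => ?_
      have hv1 : par v ∉ E1 := h21 v hv
      by_cases hp2 : par v ∈ E2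
      · simp [hv, hv1, hp2]
      · have : par v ∉ E1 ∪ E2 := by rw [Finset.mem_union]; tauto
        simp [hv, hv1, hp2, hy (par v) this]

/-- Factorization over a finite family of parent-closed disjoint pieces. -/
lemma G_biUnion (par : Fin m → Fin m) (h : Fin m → Bool → Bool → ℝ)
    {κ : Type*} [DecidableEq κ] (s : Finset κ) (Es : κ → Finset (Fin m)) (σ : Fin m → Bool)
    (hdisj : ∀ j ∈ s, ∀ j' ∈ s, j ≠ j' → Disjoint (Es j) (Es j'))
    (hpar : ∀ j ∈ s, ∀ v ∈ Es j, ∀ j' ∈ s, j' ≠ j → par v ∉ Es j') :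
    G par h (s.biUnion Es) σ = ∏ j ∈ s, G par h (Es j) σ := by
  induction s using Finset.induction_on with
  | empty => simp [G_empty]
  | @insert a s ha ih =>
    rw [Finset.biUnion_insert, Finset.prod_insert ha]
    have hd : Disjoint (Es a) (s.biUnion Es) := by
      rw [Finset.disjoint_biUnion_right]
      intro j hj
      exact hdisj a (Finset.mem_insert_self a s) j (Finset.mem_insert_of_mem hj)
        (fun hh => ha (hh ▸ hj))
    rw [G_union par h hd]
    · rw [ih]
      · intro j hj j' hj' hjj'
        exact hdisj j (Finset.mem_insert_of_mem hj) j' (Finset.mem_insert_of_mem hj') hjj'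
      · intro j hj v hv j' hj' hjj'
        exact hpar j (Finset.mem_insert_of_mem hj) v hv j' (Finset.mem_insert_of_mem hj') hjj'
    · intro v hv
      rw [Finset.mem_biUnion]
      rintro ⟨j, hj, hvj⟩
      exact hpar a (Finset.mem_insert_self a s) v hv j (Finset.mem_insert_of_mem hj)
        (fun hh => ha (hh ▸ hj)) hvj
    · intro v hv
      rw [Finset.mem_biUnion] at hv
      obtain ⟨j, hj, hvj⟩ := hv
      exact hpar j (Finset.mem_insert_of_mem hj) v hvj a (Finset.mem_insert_self a s)
        (fun hh => ha (hh.symm ▸ hj))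

lemma G_nonneg (par : Fin m → Fin m) (h : Fin m → Bool → Bool → ℝ)
    (E : Finset (Fin m)) (σ : Fin m → Bool) (h0 : ∀ v ∈ E, ∀ a c, 0 ≤ h v a c) :
    0 ≤ G par h E σ :=
  Finset.sum_nonneg fun y _ => Finset.prod_nonneg fun v hv => h0 v hv _ _

lemma G_ge (par : Fin m → Fin m) (t : Fin m → Bool → Bool → ℝ) (f : Fin m → ℝ)
    (E : Finset (Fin m)) (σ : Fin m → Bool)
    (ht : ∀ v ∈ E, ∀ a c, 0 ≤ t v a c) (hf : ∀ v ∈ E, 0 < f v ∧ f v ≤ 1) :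
    (∏ v ∈ E, f v) * G par t E σ
      ≤ G par (fun v a c => t v a c * (if a then f v else 1)) E σ := by
  rw [G, G, Finset.mul_sum]
  refine Finset.sum_le_sum fun y _ => ?_
  rw [← Finset.prod_mul_distrib]
  refine Finset.prod_le_prod (fun v hv => ?_) (fun v hv => ?_)
  · exact mul_nonneg (hf v hv).1.le (ht v hv _ _)
  · rcases Bool.eq_false_or_eq_true (y v) with hb | hb <;> rw [hb]
    · exact le_of_eq (mul_comm _ _)
    · simpa using mul_le_of_le_one_left (ht v hv false (y (par v))) (hf v hv).2

section Main
variable {m : ℕ} (i : Fin m) (par : Fin m → Fin m)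
  (r : Fin m → Fin m)
  (hrchild : ∀ v, v ≠ i → r v ≠ i ∧ par (r v) = i)
  (hrstep : ∀ v, v ≠ i → par v ≠ i → r (par v) = r v)
  (hrfix : ∀ k, k ≠ i → par k = i → r k = k)

-- children of i
def K : Finset (Fin m) := Finset.univ.filter (fun k => k ≠ i ∧ par k = i)
-- subtree blocks
def B : Fin m → Finset (Fin m) := fun k => Finset.univ.filter (fun v => v ≠ i ∧ r v = k)

lemma i_not_mem_B (k : Fin m) : i ∉ B i r k := by simp [B]

lemma mem_B {k v : Fin m} : v ∈ B i r k ↔ v ≠ i ∧ r v = k := by simp [B]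

lemma mem_K {k : Fin m} : k ∈ K i par ↔ k ≠ i ∧ par k = i := by simp [K]

include hrfix in
lemma k_mem_B {k : Fin m} (hk : k ∈ K i par) : k ∈ B i r k := by
  rw [mem_K] at hk
  rw [mem_B]
  exact ⟨hk.1, hrfix k hk.1 hk.2⟩

include hrstep hrfix in
lemma par_mem_B {k v : Fin m} (hv : v ∈ B i r k) (hpv : par v ≠ i) : par v ∈ B i r k := by
  rw [mem_B] at hv ⊢
  exact ⟨hpv, (hrstep v hv.1 hpv).trans hv.2⟩

include hrfix in
lemma par_eq_root {k v : Fin m} (hk : k ∈ K i par) (hv : v ∈ B i r k) (hpv : par v = i) :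
    v = k := by
  rw [mem_B] at hv
  rw [← hv.2, hrfix v hv.1 hpv]

lemma B_disjoint {k k' : Fin m} (h : k ≠ k') : Disjoint (B i r k) (B i r k') := by
  rw [Finset.disjoint_left]
  intro v hv hv'
  rw [mem_B] at hv hv'
  exact h (hv.2 ▸ hv'.2 ▸ rfl)

include hrchild in
lemma erase_eq_biUnion : Finset.univ.erase i = (K i par).biUnion (B i r) := by
  ext v
  simp only [Finset.mem_erase, Finset.mem_univ, and_true, Finset.mem_biUnion]
  constructor
  · intro hv
    exact ⟨r v, (mem_K i par).mpr ⟨(hrchild v hv).1, (hrchild v hv).2⟩,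
      (mem_B i r).mpr ⟨hv, rfl⟩⟩
  · rintro ⟨k, hk, hv⟩
    exact ((mem_B i r).mp hv).1

include hrchild hrfix in
lemma erase2_eq_biUnion {k : Fin m} (hk : k ∈ K i par) :
    (Finset.univ.erase i).erase k
      = (K i par).biUnion (fun k' => if k' = k then (B i r k).erase k else B i r k') := by
  have hkik := (mem_K i par).mp hk
  ext v
  simp only [Finset.mem_erase, Finset.mem_univ, and_true, Finset.mem_biUnion]
  constructor
  · rintro ⟨hvk, hvi⟩
    by_cases h : r v = k
    · refine ⟨k, hk, ?_⟩
      rw [if_pos rfl, Finset.mem_erase]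
      exact ⟨hvk, (mem_B i r).mpr ⟨hvi, h⟩⟩
    · refine ⟨r v, (mem_K i par).mpr ⟨(hrchild v hvi).1, (hrchild v hvi).2⟩, ?_⟩
      rw [if_neg h]
      exact (mem_B i r).mpr ⟨hvi, rfl⟩
  · rintro ⟨k', hk', hv⟩
    by_cases h : k' = k
    · subst h
      rw [if_pos rfl, Finset.mem_erase] at hv
      exact ⟨hv.1, ((mem_B i r).mp hv.2).1⟩
    · rw [if_neg h] at hv
      have h1 := (mem_B i r).mp hv
      refine ⟨fun hvk => ?_, h1.1⟩
      subst hvk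
      exact h ((hrfix v hkik.1 hkik.2).symm.trans h1.2).symm

include hrstep hrfix in
lemma par_mem_B_erase {k v : Fin m} (hk : k ∈ K i par) (hv : v ∈ (B i r k).erase k) :
    par v ∈ B i r k := by
  have hvB := Finset.mem_of_mem_erase hv
  by_cases hpv : par v = i
  · exact absurd (par_eq_root i par r hrfix hk hvB hpv) (Finset.mem_erase.mp hv).1
  · exact par_mem_B i par r hrstep hrfix hvB hpv

end Main

section Conv
variable {m : ℕ} (i : Fin m)

lemma sum_ite_pinned₁ (F : (Fin m → Bool) → ℝ) (c : Bool) :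
    (∑ y : Fin m → Bool, if y i = c then F y else 0)
      = ∑ y ∈ pinned (Finset.univ.erase i) (fun _ => c), F y := by
  rw [pinned, Finset.sum_filter]
  refine Finset.sum_congr rfl fun y _ => ?_
  refine if_congr ?_ rfl rfl
  constructor
  · intro h v hv
    have : v = i := by simpa using hv
    subst this; exact h
  · intro h
    exact h i (by simp)

lemma sum_ite_pinned₂ (F : (Fin m → Bool) → ℝ) {k : Fin m} (hk : k ≠ i) (c d : Bool) :
    (∑ y : Fin m → Bool, if y i = c ∧ y k = d then F y else 0)
      = ∑ y ∈ pinned ((Finset.univ.erase i).erase k)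
          (fun v => if v = k then d else c), F y := by
  rw [pinned, Finset.sum_filter]
  refine Finset.sum_congr rfl fun y _ => ?_
  refine if_congr ?_ rfl rfl
  constructor
  · rintro ⟨h1, h2⟩ v hv
    have : v = k ∨ v = i := by
      by_contra hc
      push_neg at hc
      exact hv (by simp [Finset.mem_erase, hc.1, hc.2])
    rcases this with rfl | rfl
    · simp [h2]
    · simp [h1, (Ne.symm hk)]
  · intro h
    constructor
    · have := h i (by simp [Finset.mem_erase, Ne.symm hk])
      simpa [Ne.symm hk] using this
    · have := h k (by simp)
      simpa using this

end Conv

end SCE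

/-- The tree latent pmf `q(y) = ρ(y_i) ∏_{v ≠ i} t_v(y_v, y_{par v})`. -/
noncomputable def qfun (m : ℕ) (i : Fin m) (par : Fin m → Fin m) (ρ : Bool → ℝ)
    (t : Fin m → Bool → Bool → ℝ) (y : Fin m → Bool) : ℝ :=
  ρ (y i) * ∏ v : Fin m, if v = i then 1 else t v (y v) (y (par v))

/-- The noisy-or off-probability `S(y) = (1-l) ∏_v f_v^{[y_v]}`. -/
noncomputable def Sfun (m : ℕ) (l : ℝ) (f : Fin m → ℝ) (y : Fin m → Bool) : ℝ :=
  (1 - l) * ∏ v : Fin m, if y v then f v else 1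

open Finset in
lemma qfun_pinned {m : ℕ} (i : Fin m) (par : Fin m → Fin m) (ρ : Bool → ℝ)
    (t : Fin m → Bool → Bool → ℝ) {c : Bool} {y : Fin m → Bool} (hy : y i = c) :
    qfun m i par ρ t y = ρ c * ∏ v ∈ Finset.univ.erase i, t v (y v) (y (par v)) := by
  rw [qfun, hy]
  congr 1
  rw [← Finset.mul_prod_erase Finset.univ _ (Finset.mem_univ i), if_pos rfl, one_mul]
  exact Finset.prod_congr rfl fun v hv => if_neg (Finset.mem_erase.mp hv).1

open Finset in
lemma qS_pinned {m : ℕ} (i : Fin m) (par : Fin m → Fin m) (ρ : Bool → ℝ)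
    (t : Fin m → Bool → Bool → ℝ) (l : ℝ) (f : Fin m → ℝ) {c : Bool} {y : Fin m → Bool}
    (hy : y i = c) :
    qfun m i par ρ t y * Sfun m l f y
      = ρ c * ((1 - l) * (if c then f i else 1))
          * ∏ v ∈ Finset.univ.erase i,
              (t v (y v) (y (par v)) * (if y v then f v else 1)) := by
  rw [qfun_pinned i par ρ t hy, Sfun,
    ← Finset.mul_prod_erase Finset.univ (fun v => if y v then f v else 1) (Finset.mem_univ i),
    hy, Finset.prod_mul_distrib]
  ring

theorem serial_correction_estimator (m : ℕ) (i : Fin m) (par : Fin m → Fin m)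
    (hroot : par i = i) (hne : ∀ v, v ≠ i → par v ≠ v)
    (hreach : ∀ v, ∃ n : ℕ, par^[n] v = i)
    (ρ : Bool → ℝ) (hρ0 : ∀ c, 0 ≤ ρ c) (hρ1 : ρ false + ρ true = 1)
    (t : Fin m → Bool → Bool → ℝ)
    (ht0 : ∀ v, v ≠ i → ∀ a c, 0 ≤ t v a c)
    (ht1 : ∀ v, v ≠ i → ∀ c, t v false c + t v true c = 1)
    (l : ℝ) (hl0 : 0 ≤ l) (hl1 : l < 1)
    (f : Fin m → ℝ) (hf : ∀ v, 0 < f v ∧ f v ≤ 1)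
    (hρf : 0 < ρ false) (hρt : 0 < ρ true)
    (htk : ∀ k : Fin m, k ≠ i → par k = i → ∀ d : Bool, 0 < t k d false) :
    f i =
      (∏ k ∈ Finset.univ.filter (fun k : Fin m => k ≠ i ∧ par k = i),
          ((∑ d : Bool,
              ((∑ y : Fin m → Bool,
                  if y i = true ∧ y k = d then qfun m i par ρ t y else 0) / ρ true) *
                ((∑ y : Fin m → Bool,
                    if y i = false ∧ y k = d then
                      qfun m i par ρ t y * Sfun m l f y else 0) /
                  (∑ y : Fin m → Bool,
                    if y i = false ∧ y k = d then qfun m i par ρ t y else 0))) /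
            ((∑ y : Fin m → Bool,
                if y i = false then qfun m i par ρ t y * Sfun m l f y else 0) /
              ρ false))⁻¹) *
        (((∑ y : Fin m → Bool,
            if y i = true then qfun m i par ρ t y * Sfun m l f y else 0) / ρ true) /
          ((∑ y : Fin m → Bool,
            if y i = false then qfun m i par ρ t y * Sfun m l f y else 0) / ρ false)) := by
  -- depth function
  obtain ⟨dep, hdspec, hdepi, hdmin⟩ :
      ∃ dep : Fin m → ℕ, (∀ v, par^[dep v] v = i) ∧ dep i = 0 ∧
        (∀ v n, par^[n] v = i → dep v ≤ n) :=
    ⟨fun v => Nat.find (hreach v), fun v => Nat.find_spec (hreach v),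
      (Nat.find_eq_zero (hreach i)).mpr (by simp), fun v n h => Nat.find_le h⟩
  have hdep : ∀ v, v ≠ i → dep v = dep (par v) + 1 := by
    intro v hv
    have h1 : 1 ≤ dep v := by
      rcases Nat.eq_zero_or_pos (dep v) with h | h
      · exact absurd (by simpa [h] using hdspec v) hv
      · exact h
    have h2 : par^[dep v - 1] (par v) = i := by
      have h3 := hdspec v
      rwa [show dep v = (dep v - 1) + 1 by omega, Function.iterate_succ_apply] at h3
    have h3 := hdmin (par v) _ h2
    have h4 : par^[dep (par v) + 1] v = i := by
      rw [Function.iterate_succ_apply]; exact hdspec (par v)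
    have h5 := hdmin v _ h4
    omega
  -- root-child function
  obtain ⟨r, hrchild, hrstep, hrfix⟩ :
      ∃ r : Fin m → Fin m, (∀ v, v ≠ i → r v ≠ i ∧ par (r v) = i) ∧
        (∀ v, v ≠ i → par v ≠ i → r (par v) = r v) ∧
        (∀ k, k ≠ i → par k = i → r k = k) := by
    refine ⟨fun v => par^[dep v - 1] v, fun v hv => ⟨?_, ?_⟩, ?_, ?_⟩
    · intro hcon
      have h1 := hdmin v _ hcon
      have h2 := hdep v hv
      omega
    · have h1 : 1 ≤ dep v := by have := hdep v hv; omega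
      have h2 : par^[(dep v - 1) + 1] v = i := by
        rw [Nat.sub_add_cancel h1]; exact hdspec v
      rwa [Function.iterate_succ_apply'] at h2
    · intro v hv hpv
      have e1 := hdep v hv
      have h1 : 1 ≤ dep (par v) := by have := hdep (par v) hpv; omega
      show par^[dep (par v) - 1] (par v) = par^[dep v - 1] v
      calc par^[dep (par v) - 1] (par v) = par^[(dep (par v) - 1) + 1] v :=
            (Function.iterate_succ_apply par _ v).symm
        _ = par^[dep v - 1] v := by congr 1; omega
    · intro k hki hpk
      show par^[dep k - 1] k = k
      have h1 : dep k = 1 := by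
        have h2 := hdep k hki
        rw [hpk, hdepi] at h2
        omega
      rw [h1]
      rfl
  -- abbreviations
  set hq : Fin m → Bool → Bool → ℝ := fun v a c => t v a c * (if a then f v else 1) with hhq
  set A : Fin m → Bool → ℝ :=
    fun k c => SCE.G par hq (SCE.B i r k) (fun _ => c) with hAdef
  set W : Fin m → Bool → ℝ :=
    fun k d => SCE.G par hq ((SCE.B i r k).erase k)
      (fun v => if v = k then d else false) with hWdef
  have hdisjB : ∀ j ∈ SCE.K i par, ∀ j' ∈ SCE.K i par, j ≠ j' →
      Disjoint (SCE.B i r j) (SCE.B i r j') := fun j _ j' _ h => SCE.B_disjoint i r h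
  have hparB : ∀ j ∈ SCE.K i par, ∀ v ∈ SCE.B i r j, ∀ j' ∈ SCE.K i par, j' ≠ j →
      par v ∉ SCE.B i r j' := by
    intro j hj v hv j' hj' hjj'
    by_cases hpv : par v = i
    · rw [hpv]; exact SCE.i_not_mem_B i r j'
    · exact Finset.disjoint_left.mp (SCE.B_disjoint i r (Ne.symm hjj'))
        (SCE.par_mem_B i par r hrstep hrfix hv hpv)
  -- the marginal identities
  have H1 : ∀ c : Bool,
      (∑ y : Fin m → Bool, if y i = c then qfun m i par ρ t y else 0) = ρ c := by
    intro c
    rw [SCE.sum_ite_pinned₁ i (fun y => qfun m i par ρ t y) c]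
    rw [Finset.sum_congr rfl (fun y hy => qfun_pinned i par ρ t
      (SCE.mem_pinned.mp hy i (by simp)))]
    rw [← Finset.mul_sum]
    have hG := SCE.G_norm_one par t i dep hdep hne ht1 (Finset.univ.erase i)
      (by simp) (fun _ => c)
    rw [SCE.G] at hG
    rw [hG, mul_one]
  have H2 : ∀ k ∈ SCE.K i par, ∀ c d : Bool,
      (∑ y : Fin m → Bool, if y i = c ∧ y k = d then qfun m i par ρ t y else 0)
        = ρ c * t k d c := by
    intro k hk c d
    obtain ⟨hki, hpk⟩ := (SCE.mem_K i par).mp hk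
    rw [SCE.sum_ite_pinned₂ i (fun y => qfun m i par ρ t y) hki c d]
    have hrw : ∀ y ∈ SCE.pinned ((Finset.univ.erase i).erase k)
        (fun v => if v = k then d else c),
        qfun m i par ρ t y = (ρ c * t k d c)
          * ∏ v ∈ (Finset.univ.erase i).erase k, t v (y v) (y (par v)) := by
      intro y hy
      have hmem := SCE.mem_pinned.mp hy
      have hyi : y i = c := by
        have h := hmem i (by simp)
        simpa [Ne.symm hki] using h
      have hyk : y k = d := by
        have h := hmem k (by simp)
        simpa using h
      rw [qfun_pinned i par ρ t hyi]
      rw [← Finset.mul_prod_erase (Finset.univ.erase i) _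
        (Finset.mem_erase.mpr ⟨hki, Finset.mem_univ k⟩)]
      rw [hyk, hpk, hyi]
      ring
    rw [Finset.sum_congr rfl hrw, ← Finset.mul_sum]
    have hG := SCE.G_norm_one par t i dep hdep hne ht1 ((Finset.univ.erase i).erase k)
      (fun h => (Finset.mem_erase.mp (Finset.mem_of_mem_erase h)).1 rfl)
      (fun v => if v = k then d else c)
    rw [SCE.G] at hG
    rw [hG, mul_one]
  have H3 : ∀ c : Bool,
      (∑ y : Fin m → Bool, if y i = c then qfun m i par ρ t y * Sfun m l f y else 0)
        = ρ c * ((1 - l) * (if c then f i else 1) * ∏ k ∈ SCE.K i par, A k c) := by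
    intro c
    rw [SCE.sum_ite_pinned₁ i (fun y => qfun m i par ρ t y * Sfun m l f y) c]
    rw [Finset.sum_congr rfl (fun y hy => qS_pinned i par ρ t l f
      (SCE.mem_pinned.mp hy i (by simp)))]
    rw [← Finset.mul_sum]
    have hGdef : SCE.G par hq (Finset.univ.erase i) (fun _ => c)
        = ∑ y ∈ SCE.pinned (Finset.univ.erase i) (fun _ => c),
            ∏ v ∈ Finset.univ.erase i,
              (t v (y v) (y (par v)) * (if y v then f v else 1)) := rfl
    rw [← hGdef]
    have hGB : SCE.G par hq (Finset.univ.erase i) (fun _ => c)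
        = ∏ k ∈ SCE.K i par, A k c := by
      rw [SCE.erase_eq_biUnion i par r hrchild,
        SCE.G_biUnion par hq (SCE.K i par) (SCE.B i r) _ hdisjB hparB]
    rw [hGB]
    ring
  have H4 : ∀ k ∈ SCE.K i par, ∀ d : Bool,
      (∑ y : Fin m → Bool,
          if y i = false ∧ y k = d then qfun m i par ρ t y * Sfun m l f y else 0)
        = ρ false * ((1 - l) * (t k d false * (if d then f k else 1))
            * (W k d * ∏ k' ∈ (SCE.K i par).erase k, A k' false)) := by
    intro k hk d
    obtain ⟨hki, hpk⟩ := (SCE.mem_K i par).mp hk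
    rw [SCE.sum_ite_pinned₂ i (fun y => qfun m i par ρ t y * Sfun m l f y) hki false d]
    have hrw : ∀ y ∈ SCE.pinned ((Finset.univ.erase i).erase k)
        (fun v => if v = k then d else false),
        qfun m i par ρ t y * Sfun m l f y
          = (ρ false * ((1 - l) * (t k d false * (if d then f k else 1))))
              * ∏ v ∈ (Finset.univ.erase i).erase k,
                  (t v (y v) (y (par v)) * (if y v then f v else 1)) := by
      intro y hy
      have hmem := SCE.mem_pinned.mp hy
      have hyi : y i = false := by
        have h := hmem i (by simp)
        simpa [Ne.symm hki] using h
      have hyk : y k = d := by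
        have h := hmem k (by simp)
        simpa using h
      rw [qS_pinned i par ρ t l f hyi]
      rw [← Finset.mul_prod_erase (Finset.univ.erase i)
        (fun v => t v (y v) (y (par v)) * (if y v then f v else 1))
        (Finset.mem_erase.mpr ⟨hki, Finset.mem_univ k⟩)]
      rw [hyk, hpk, hyi]
      simp only [if_neg (Bool.false_ne_true)]
      ring
    rw [Finset.sum_congr rfl hrw, ← Finset.mul_sum]
    have hGdef : SCE.G par hq ((Finset.univ.erase i).erase k)
        (fun v => if v = k then d else false)
        = ∑ y ∈ SCE.pinned ((Finset.univ.erase i).erase k)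
            (fun v => if v = k then d else false),
            ∏ v ∈ (Finset.univ.erase i).erase k,
              (t v (y v) (y (par v)) * (if y v then f v else 1)) := rfl
    rw [← hGdef]
    have hsub : ∀ j, (if j = k then (SCE.B i r k).erase k else SCE.B i r j)
        ⊆ SCE.B i r j := by
      intro j
      by_cases h : j = k
      · subst h; rw [if_pos rfl]; exact Finset.erase_subset _ _
      · rw [if_neg h]
    have hdisj2 : ∀ j ∈ SCE.K i par, ∀ j' ∈ SCE.K i par, j ≠ j' →
        Disjoint (if j = k then (SCE.B i r k).erase k else SCE.B i r j)
          (if j' = k then (SCE.B i r k).erase k else SCE.B i r j') :=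
      fun j _ j' _ h => ((SCE.B_disjoint i r h).mono (hsub j) (hsub j'))
    have hpar2 : ∀ j ∈ SCE.K i par,
        ∀ v ∈ (if j = k then (SCE.B i r k).erase k else SCE.B i r j),
        ∀ j' ∈ SCE.K i par, j' ≠ j →
          par v ∉ (if j' = k then (SCE.B i r k).erase k else SCE.B i r j') := by
      intro j hj v hv j' hj' hjj' hcon
      have hcon' := hsub j' hcon
      by_cases h : j = k
      · subst h
        rw [if_pos rfl] at hv
        have hpvB : par v ∈ SCE.B i r j := SCE.par_mem_B_erase i par r hrstep hrfix hk hv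
        exact (Finset.disjoint_left.mp (SCE.B_disjoint i r (Ne.symm hjj')) hpvB) hcon'
      · rw [if_neg h] at hv
        exact hparB j hj v hv j' hj' hjj' hcon'
    have hGB : SCE.G par hq ((Finset.univ.erase i).erase k)
        (fun v => if v = k then d else false)
        = W k d * ∏ k' ∈ (SCE.K i par).erase k, A k' false := by
      rw [SCE.erase2_eq_biUnion i par r hrchild hrfix hk]
      rw [SCE.G_biUnion par hq (SCE.K i par)
        (fun k' => if k' = k then (SCE.B i r k).erase k else SCE.B i r k') _ hdisj2 hpar2]
      rw [← Finset.mul_prod_erase (SCE.K i par) _ hk, if_pos rfl]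
      congr 1
      refine Finset.prod_congr rfl fun k' hk' => ?_
      rw [if_neg (Finset.mem_erase.mp hk').1]
      refine SCE.G_congr_sigma par hq (SCE.B i r k')
        (fun v => if v = k then d else false) (fun _ => false) ?_
      intro v hv hpv
      have hpvi : par v = i := by
        by_contra hc
        exact hpv (SCE.par_mem_B i par r hrstep hrfix hv hc)
      rw [hpvi]
      simp [Ne.symm hki]
    rw [hGB]
    ring
  have H5 : ∀ k ∈ SCE.K i par, ∀ c : Bool,
      A k c = ∑ d : Bool, t k d c * (if d then f k else 1) * W k d := by
    intro k hk c
    obtain ⟨hki, hpk⟩ := (SCE.mem_K i par).mp hk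
    have hkB : k ∈ SCE.B i r k := SCE.k_mem_B i par r hrfix hk
    have hpkB : par k ∉ SCE.B i r k := by rw [hpk]; exact SCE.i_not_mem_B i r k
    have hsplit := SCE.G_pin_split par hq (E := SCE.B i r k) (σ := fun _ => c) hkB hpkB
    rw [show A k c = SCE.G par hq (SCE.B i r k) (fun _ => c) from rfl, hsplit]
    refine Finset.sum_congr rfl fun d _ => ?_
    have hGW : SCE.G par hq ((SCE.B i r k).erase k)
        (Function.update (fun _ => c) k d) = W k d := by
      refine SCE.G_congr_sigma par hq _ _ _ ?_
      intro v hv hpv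
      have hpvB : par v ∈ SCE.B i r k := SCE.par_mem_B_erase i par r hrstep hrfix hk hv
      have hpvk : par v = k := by
        by_contra hc
        exact hpv (Finset.mem_erase.mpr ⟨hc, hpvB⟩)
      rw [hpvk]
      simp
    rw [hGW]
  have HW : ∀ k ∈ SCE.K i par, ∀ d : Bool, 0 < W k d := by
    intro k hk d
    have hne' : ∀ v ∈ (SCE.B i r k).erase k, v ≠ i := fun v hv =>
      ((SCE.mem_B i r).mp (Finset.mem_of_mem_erase hv)).1
    have hge := SCE.G_ge par t f ((SCE.B i r k).erase k)
      (fun v => if v = k then d else false)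
      (fun v hv a c => ht0 v (hne' v hv) a c) (fun v _ => hf v)
    have hGt : SCE.G par t ((SCE.B i r k).erase k)
        (fun v => if v = k then d else false) = 1 :=
      SCE.G_norm_one par t i dep hdep hne ht1 _ (fun h => (hne' i h) rfl) _
    rw [hGt, mul_one] at hge
    have hprod : 0 < ∏ v ∈ (SCE.B i r k).erase k, f v :=
      Finset.prod_pos fun v _ => (hf v).1
    exact lt_of_lt_of_le hprod hge
  have HA : ∀ k ∈ SCE.K i par, ∀ c : Bool, 0 < A k c := by
    intro k hk c
    obtain ⟨hki, hpk⟩ := (SCE.mem_K i par).mp hk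
    rw [H5 k hk c, Fintype.sum_bool]
    have hpos : 0 < t k false c ∨ 0 < t k true c := by
      by_contra hc
      push_neg at hc
      have e1 := ht1 k hki c
      have e2 := ht0 k hki false c
      have e3 := ht0 k hki true c
      have : t k false c = 0 := le_antisymm hc.1 e2
      have : t k true c = 0 := le_antisymm hc.2 e3
      linarith [ht1 k hki c]
    rcases hpos with h | h
    · have hterm : 0 < t k false c * (if (false : Bool) then f k else 1) * W k false := by
        simpa using mul_pos h (HW k hk false)
      have hterm2 : 0 ≤ t k true c * (if (true : Bool) then f k else 1) * W k true := by
        simpa using mul_nonneg (mul_nonneg (ht0 k hki true c) (hf k).1.le) (HW k hk true).le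
      linarith
    · have hterm : 0 < t k true c * (if (true : Bool) then f k else 1) * W k true := by
        simpa using mul_pos (mul_pos h (hf k).1) (HW k hk true)
      have hterm2 : 0 ≤ t k false c * (if (false : Bool) then f k else 1) * W k false := by
        simpa using mul_nonneg (ht0 k hki false c) (HW k hk false).le
      linarith
  -- final algebra
  have hl : (0:ℝ) < 1 - l := by linarith
  have hP0 : 0 < ∏ k ∈ SCE.K i par, A k false :=
    Finset.prod_pos fun k hk => HA k hk false
  have hP1 : 0 < ∏ k ∈ SCE.K i par, A k true :=
    Finset.prod_pos fun k hk => HA k hk true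
  have hKr : Finset.univ.filter (fun k : Fin m => k ≠ i ∧ par k = i) = SCE.K i par := rfl
  rw [hKr]
  have hfin : ∀ k ∈ SCE.K i par,
      ((∑ d : Bool,
          ((∑ y : Fin m → Bool,
              if y i = true ∧ y k = d then qfun m i par ρ t y else 0) / ρ true) *
            ((∑ y : Fin m → Bool,
                if y i = false ∧ y k = d then
                  qfun m i par ρ t y * Sfun m l f y else 0) /
              (∑ y : Fin m → Bool,
                if y i = false ∧ y k = d then qfun m i par ρ t y else 0))) /
        ((∑ y : Fin m → Bool,
            if y i = false then qfun m i par ρ t y * Sfun m l f y else 0) /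
          ρ false)) = A k true / A k false := by
    intro k hk
    obtain ⟨hki, hpk⟩ := (SCE.mem_K i par).mp hk
    have hQ : 0 < ∏ k' ∈ (SCE.K i par).erase k, A k' false :=
      Finset.prod_pos fun k' hk' => HA k' (Finset.mem_of_mem_erase hk') false
    simp only [H2 k hk, H4 k hk, H3]
    have hsum : (∑ d : Bool,
        (ρ true * t k d true / ρ true) *
          ((ρ false * ((1 - l) * (t k d false * (if d then f k else 1))
              * (W k d * ∏ k' ∈ (SCE.K i par).erase k, A k' false)))
            / (ρ false * t k d false)))
        = ((1 - l) * ∏ k' ∈ (SCE.K i par).erase k, A k' false) * A k true := by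
      rw [H5 k hk true, Finset.mul_sum]
      refine Finset.sum_congr rfl fun d _ => ?_
      have htd := (htk k hki hpk d).ne'
      field_simp
    rw [hsum]
    have hP0split : (∏ k' ∈ SCE.K i par, A k' false)
        = A k false * ∏ k' ∈ (SCE.K i par).erase k, A k' false :=
      (Finset.mul_prod_erase _ _ hk).symm
    rw [hP0split]
    rw [mul_div_cancel_left₀ _ hρf.ne']
    simp only [if_neg (Bool.false_ne_true)]
    rw [div_eq_div_iff (by
        exact (mul_pos (mul_pos hl one_pos) (mul_pos (HA k hk false) hQ)).ne')
      (HA k hk false).ne']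
    ring
  rw [Finset.prod_congr rfl fun k hk => by rw [hfin k hk, inv_div]]
  rw [Finset.prod_div_distrib]
  simp only [H3]
  rw [mul_div_cancel_left₀ _ hρt.ne']
  rw [mul_div_cancel_left₀ _ hρf.ne']
  simp only [if_pos rfl, if_neg (Bool.false_ne_true)]
  rw [show (if True then f i else 1) = f i from if_pos trivial]
  rw [div_mul_div_comm, eq_div_iff (ne_of_gt (by positivity))]
  ring
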